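/- Fix d, n ≥ 1, matrices K, Q ∈ ℝ^{d×d}, and maps y_1,…,y_n : {−1,1}^n → ℝ^d with ‖y_i(x)‖₂ ≤ √d for all i and x. Let C_A = d·‖KᵀQ‖₂ (spectral norm), define logits a_{i,u}(x) = (K·y_u(x))ᵀ·Q·y_i(x) and softmax weights â_{i,u}(x) = exp(a_{i,u}(x)) / Σ_{s=1}^n exp(a_{i,s}(x)). Then for every x ∈ {−1,1}^n and all i, q ∈ {1,…,n}: Σ_{u=1}^n |â_{i,u}(x) − â_{i,u}(x^{⊕q})| ≤ 2·exp(4·C_A)·( ‖y_i(x) − y_i(x^{⊕q})‖₂ + (1/n)·Σ_{j=1}^n ‖y_j(x) − y_j(x^{⊕q})‖₂ ). -/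

import Mathlib

open scoped BigOperators
open Matrix

noncomputable section

namespace SensTF

/-- Flip the `q`-th bit of `x`. -/
def flip {n : ℕ} (x : Fin n → Bool) (q : Fin n) : Fin n → Bool :=
  Function.update x q (!(x q))

/-- Euclidean norm of a vector in `ℝ^d`. -/
def enorm {d : ℕ} (v : Fin d → ℝ) : ℝ := Real.sqrt (∑ j : Fin d, (v j) ^ 2)

/-- Spectral norm (ℓ²-operator norm) of a `d × d` matrix. -/
def specNorm {d : ℕ} (M : Matrix (Fin d) (Fin d) ℝ) : ℝ :=
  ‖Matrix.toEuclideanCLM (𝕜 := ℝ) M‖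

/-- Attention logit `a_{i,u} = (K y_u)ᵀ Q y_i`. -/
def attLogit {d n : ℕ} (K Q : Matrix (Fin d) (Fin d) ℝ)
    (yp : Fin n → Fin d → ℝ) (i u : Fin n) : ℝ :=
  dotProduct (K.mulVec (yp u)) (Q.mulVec (yp i))

/-- Attention weight (softmax of the logits). -/
def attWeight {d n : ℕ} (K Q : Matrix (Fin d) (Fin d) ℝ)
    (yp : Fin n → Fin d → ℝ) (i u : Fin n) : ℝ :=
  Real.exp (attLogit K Q yp i u) / ∑ s : Fin n, Real.exp (attLogit K Q yp i s)

end SensTF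

open SensTF

/- ### Auxiliary lemmas -/

lemma aux_enorm_eq {d : ℕ} (v : Fin d → ℝ) :
    SensTF.enorm v = ‖(WithLp.equiv 2 (Fin d → ℝ)).symm v‖ := by
  rw [EuclideanSpace.norm_eq, SensTF.enorm]
  congr 1
  apply Finset.sum_congr rfl
  intro j _
  rw [Real.norm_eq_abs, sq_abs]
  rfl

lemma aux_enorm_nonneg {d : ℕ} (v : Fin d → ℝ) : 0 ≤ SensTF.enorm v := Real.sqrt_nonneg _

lemma aux_dot_mulVec_le {d : ℕ} (M : Matrix (Fin d) (Fin d) ℝ) (u v : Fin d → ℝ) :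
    |dotProduct u (M.mulVec v)| ≤ specNorm M * SensTF.enorm u * SensTF.enorm v := by
  have h1 : dotProduct u (M.mulVec v) =
      (inner ℝ ((WithLp.equiv 2 (Fin d → ℝ)).symm u)
        ((Matrix.toEuclideanCLM (𝕜 := ℝ) M) ((WithLp.equiv 2 (Fin d → ℝ)).symm v)) : ℝ) := by
    rw [WithLp.equiv_symm_apply, Matrix.toEuclideanCLM_toLp]
    simp [PiLp.inner_apply, RCLike.inner_apply, dotProduct, Matrix.toLin'_apply, mul_comm]
  rw [h1]
  calc _ ≤ ‖(WithLp.equiv 2 (Fin d → ℝ)).symm u‖ *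
      ‖(Matrix.toEuclideanCLM (𝕜 := ℝ) M) ((WithLp.equiv 2 (Fin d → ℝ)).symm v)‖ :=
        abs_real_inner_le_norm _ _
    _ ≤ ‖(WithLp.equiv 2 (Fin d → ℝ)).symm u‖ *
        (specNorm M * ‖(WithLp.equiv 2 (Fin d → ℝ)).symm v‖) := by
        gcongr; exact ContinuousLinearMap.le_opNorm _ _
    _ = specNorm M * SensTF.enorm u * SensTF.enorm v := by rw [aux_enorm_eq, aux_enorm_eq]; ring

lemma aux_attLogit_eq {d n : ℕ} (K Q : Matrix (Fin d) (Fin d) ℝ)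
    (yp : Fin n → Fin d → ℝ) (i u : Fin n) :
    attLogit K Q yp i u = dotProduct (yp u) ((Kᵀ * Q).mulVec (yp i)) := by
  rw [attLogit, ← Matrix.mulVec_mulVec]
  conv_rhs => rw [Matrix.dotProduct_mulVec, Matrix.vecMul_transpose]

lemma aux_exp_lip {a b C : ℝ} (ha : |a| ≤ C) (hb : |b| ≤ C) :
    |Real.exp a - Real.exp b| ≤ Real.exp C * |a - b| := by
  wlog h : b ≤ a generalizing a b
  · rw [abs_sub_comm, abs_sub_comm a b]; exact this hb ha (le_of_not_ge h)
  rw [abs_of_nonneg (sub_nonneg.2 (Real.exp_le_exp.2 h)), abs_of_nonneg (sub_nonneg.2 h)]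
  have h2 : Real.exp a * (b - a + 1) ≤ Real.exp b := by
    calc Real.exp a * (b - a + 1) ≤ Real.exp a * Real.exp (b - a) := by
          have := Real.add_one_le_exp (b - a)
          nlinarith [Real.exp_pos a]
      _ = Real.exp b := by rw [← Real.exp_add]; ring_nf
  have heaC : Real.exp a ≤ Real.exp C := Real.exp_le_exp.2 ((le_abs_self a).trans ha)
  nlinarith [mul_le_mul_of_nonneg_right heaC (sub_nonneg.2 h)]

lemma aux_softmax_tv {n : ℕ} (hn : 0 < n) (a b : Fin n → ℝ) (C : ℝ)
    (ha : ∀ u, |a u| ≤ C) (hb : ∀ u, |b u| ≤ C) :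
    ∑ u : Fin n, |Real.exp (a u) / (∑ s : Fin n, Real.exp (a s)) -
        Real.exp (b u) / (∑ s : Fin n, Real.exp (b s))| ≤
      2 * Real.exp (2 * C) / n * ∑ u : Fin n, |a u - b u| := by
  have hne : Nonempty (Fin n) := Fin.pos_iff_nonempty.mp hn
  set A := ∑ s : Fin n, Real.exp (a s) with hA
  set B := ∑ s : Fin n, Real.exp (b s) with hB
  have hApos : 0 < A := Finset.sum_pos (fun s _ => Real.exp_pos _) Finset.univ_nonempty
  have hBpos : 0 < B := Finset.sum_pos (fun s _ => Real.exp_pos _) Finset.univ_nonempty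
  have hnR : (0:ℝ) < n := Nat.cast_pos.2 hn
  have hAge : (n : ℝ) * Real.exp (-C) ≤ A := by
    calc (n:ℝ) * Real.exp (-C) = ∑ _s : Fin n, Real.exp (-C) := by
          simp [Finset.sum_const, mul_comm]
      _ ≤ A := Finset.sum_le_sum fun s _ => Real.exp_le_exp.2 ((abs_le.mp (ha s)).1)
  set S := ∑ u : Fin n, |Real.exp (a u) - Real.exp (b u)| with hS
  set T := ∑ u : Fin n, |a u - b u| with hT
  have hSnn : 0 ≤ S := Finset.sum_nonneg fun u _ => abs_nonneg _
  have hTnn : 0 ≤ T := Finset.sum_nonneg fun u _ => abs_nonneg _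
  have hBA : |B - A| ≤ S := by
    rw [hB, hA, ← Finset.sum_sub_distrib]
    refine (Finset.abs_sum_le_sum_abs _ _).trans (le_of_eq ?_)
    exact Finset.sum_congr rfl fun u _ => abs_sub_comm _ _
  have hST : S ≤ Real.exp C * T := by
    rw [hS, hT, Finset.mul_sum]
    exact Finset.sum_le_sum fun u _ => aux_exp_lip (ha u) (hb u)
  have key : ∀ u : Fin n, |Real.exp (a u) / A - Real.exp (b u) / B| ≤
      |Real.exp (a u) - Real.exp (b u)| / A + Real.exp (b u) * |B - A| / (A * B) := by
    intro u
    have heq : Real.exp (a u) / A - Real.exp (b u) / B =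
        (Real.exp (a u) - Real.exp (b u)) / A + Real.exp (b u) * (B - A) / (A * B) := by
      field_simp; ring
    rw [heq]
    calc |(Real.exp (a u) - Real.exp (b u)) / A + Real.exp (b u) * (B - A) / (A * B)|
        ≤ |(Real.exp (a u) - Real.exp (b u)) / A| + |Real.exp (b u) * (B - A) / (A * B)| :=
          abs_add_le _ _
      _ = |Real.exp (a u) - Real.exp (b u)| / A + Real.exp (b u) * |B - A| / (A * B) := by
          rw [abs_div, abs_div, abs_mul, abs_of_pos hApos, abs_of_pos (mul_pos hApos hBpos),
            abs_of_pos (Real.exp_pos _)]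
  calc ∑ u : Fin n, |Real.exp (a u) / A - Real.exp (b u) / B|
      ≤ ∑ u : Fin n, (|Real.exp (a u) - Real.exp (b u)| / A +
          Real.exp (b u) * |B - A| / (A * B)) := Finset.sum_le_sum fun u _ => key u
    _ = S / A + |B - A| / A := by
        rw [Finset.sum_add_distrib, ← Finset.sum_div]
        congr 1
        have h3 : ∑ u : Fin n, Real.exp (b u) * |B - A| / (A * B) = B * |B - A| / (A * B) := by
          rw [← Finset.sum_div, ← Finset.sum_mul]
        rw [h3]; field_simp
    _ ≤ S / A + S / A := by gcongr
    _ = 2 * S / A := by ring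
    _ ≤ 2 * (Real.exp C * T) / ((n : ℝ) * Real.exp (-C)) := by
        apply div_le_div₀ (by positivity) (by linarith) (by positivity) hAge
    _ = 2 * Real.exp (2 * C) / n * T := by
        rw [Real.exp_neg]
        have h2 : Real.exp (2 * C) = Real.exp C * Real.exp C := by
          rw [← Real.exp_add]; ring_nf
        rw [h2]
        field_simp

set_option maxHeartbeats 1000000 in
/-- Lemma: pointwise Lipschitz bound on attention at higher layers.
If `‖y_i(x)‖₂ ≤ √d` for all `i, x` and `C_A = d·‖KᵀQ‖₂`, then
`∑_u |â_{i,u}(x) − â_{i,u}(x^{⊕q})| ≤ 2·exp(4C_A)·(‖y_i(x) − y_i(x^{⊕q})‖₂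
  + (1/n)·∑_j ‖y_j(x) − y_j(x^{⊕q})‖₂)`. -/
theorem statement11 {d n : ℕ} (K Q : Matrix (Fin d) (Fin d) ℝ)
    (y : Fin n → (Fin n → Bool) → Fin d → ℝ)
    (hy : ∀ (i : Fin n) (x : Fin n → Bool), SensTF.enorm (y i x) ≤ Real.sqrt d)
    (x : Fin n → Bool) (i q : Fin n) :
    ∑ u : Fin n,
        |attWeight K Q (fun w => y w x) i u -
          attWeight K Q (fun w => y w (flip x q)) i u| ≤
      2 * Real.exp (4 * (d * specNorm (Kᵀ * Q))) *
        (SensTF.enorm (y i x - y i (flip x q)) +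
          (1 / n) * ∑ j : Fin n, SensTF.enorm (y j x - y j (flip x q))) := by
  have hn : 0 < n := i.pos
  have hnR : (0:ℝ) < n := Nat.cast_pos.2 hn
  set x' := flip x q with hx'
  set sN := specNorm (Kᵀ * Q) with hsN
  have hsNnn : 0 ≤ sN := norm_nonneg _
  set C := (d:ℝ) * sN with hC
  have hCnn : 0 ≤ C := mul_nonneg (Nat.cast_nonneg _) hsNnn
  have hsd : Real.sqrt d * Real.sqrt d = (d:ℝ) :=
    Real.mul_self_sqrt (Nat.cast_nonneg _)
  -- bound on the logits
  have hbound : ∀ (yp : Fin n → Fin d → ℝ), (∀ w, SensTF.enorm (yp w) ≤ Real.sqrt d) →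
      ∀ u, |attLogit K Q yp i u| ≤ C := by
    intro yp hyp u
    rw [aux_attLogit_eq]
    calc |dotProduct (yp u) ((Kᵀ * Q).mulVec (yp i))|
        ≤ sN * SensTF.enorm (yp u) * SensTF.enorm (yp i) := aux_dot_mulVec_le _ _ _
      _ ≤ sN * Real.sqrt d * Real.sqrt d :=
          mul_le_mul (mul_le_mul_of_nonneg_left (hyp u) hsNnn) (hyp i)
            (aux_enorm_nonneg _) (mul_nonneg hsNnn (Real.sqrt_nonneg _))
      _ = C := by rw [mul_assoc, hsd, hC]; ring
  have ha : ∀ u, |attLogit K Q (fun w => y w x) i u| ≤ C :=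
    hbound _ (fun w => hy w x)
  have hb : ∀ u, |attLogit K Q (fun w => y w x') i u| ≤ C :=
    hbound _ (fun w => hy w x')
  set Δi := SensTF.enorm (y i x - y i x') with hΔi
  set SΔ := ∑ j : Fin n, SensTF.enorm (y j x - y j x') with hSΔ
  have hΔinn : 0 ≤ Δi := aux_enorm_nonneg _
  have hSΔnn : 0 ≤ SΔ := Finset.sum_nonneg fun j _ => aux_enorm_nonneg _
  -- bound on logit differences
  have hdiff : ∀ u, |attLogit K Q (fun w => y w x) i u - attLogit K Q (fun w => y w x') i u| ≤
      sN * Real.sqrt d * (Δi + SensTF.enorm (y u x - y u x')) := by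
    intro u
    have hsplit : attLogit K Q (fun w => y w x) i u - attLogit K Q (fun w => y w x') i u =
        dotProduct (y u x) ((Kᵀ * Q).mulVec (y i x - y i x')) +
          dotProduct (y u x - y u x') ((Kᵀ * Q).mulVec (y i x')) := by
      rw [aux_attLogit_eq, aux_attLogit_eq, Matrix.mulVec_sub, dotProduct_sub, sub_dotProduct]
      ring
    rw [hsplit]
    calc |dotProduct (y u x) ((Kᵀ * Q).mulVec (y i x - y i x')) +
          dotProduct (y u x - y u x') ((Kᵀ * Q).mulVec (y i x'))|
        ≤ |dotProduct (y u x) ((Kᵀ * Q).mulVec (y i x - y i x'))| +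
          |dotProduct (y u x - y u x') ((Kᵀ * Q).mulVec (y i x'))| := abs_add_le _ _
      _ ≤ sN * SensTF.enorm (y u x) * Δi + sN * SensTF.enorm (y u x - y u x') * SensTF.enorm (y i x') :=
          add_le_add (aux_dot_mulVec_le _ _ _) (aux_dot_mulVec_le _ _ _)
      _ ≤ sN * Real.sqrt d * Δi + sN * SensTF.enorm (y u x - y u x') * Real.sqrt d :=
          add_le_add
            (mul_le_mul_of_nonneg_right (mul_le_mul_of_nonneg_left (hy u x) hsNnn) hΔinn)
            (mul_le_mul_of_nonneg_left (hy i x')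
              (mul_nonneg hsNnn (aux_enorm_nonneg _)))
      _ = sN * Real.sqrt d * (Δi + SensTF.enorm (y u x - y u x')) := by ring
  have hsum : ∑ u : Fin n, |attLogit K Q (fun w => y w x) i u -
      attLogit K Q (fun w => y w x') i u| ≤ sN * Real.sqrt d * ((n : ℝ) * Δi + SΔ) := by
    calc ∑ u : Fin n, |attLogit K Q (fun w => y w x) i u - attLogit K Q (fun w => y w x') i u|
        ≤ ∑ u : Fin n, sN * Real.sqrt d * (Δi + SensTF.enorm (y u x - y u x')) :=
          Finset.sum_le_sum fun u _ => hdiff u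
      _ = sN * Real.sqrt d * ((n : ℝ) * Δi + SΔ) := by
          rw [← Finset.mul_sum, Finset.sum_add_distrib, Finset.sum_const, Finset.card_univ,
            Fintype.card_fin, nsmul_eq_mul, hSΔ]
  -- the key spectral bound √d · ‖M‖ ≤ exp(2C)
  have hkey : sN * Real.sqrt d ≤ Real.exp (2 * C) := by
    have h1 : Real.sqrt d ≤ (d : ℝ) := by
      rcases Nat.eq_zero_or_pos d with h | h
      · simp [h]
      · have h1d : (1:ℝ) ≤ (d:ℝ) := Nat.one_le_cast.2 h
        have h2 := Real.sqrt_le_sqrt (show (d:ℝ) ≤ (d:ℝ)^2 by nlinarith)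
        rwa [Real.sqrt_sq (by positivity)] at h2
    have h2 : sN * Real.sqrt d ≤ C := by
      rw [hC]
      nlinarith [mul_le_mul_of_nonneg_left h1 hsNnn]
    have h3 := Real.add_one_le_exp (2 * C)
    linarith
  -- put everything together
  calc ∑ u : Fin n,
        |attWeight K Q (fun w => y w x) i u - attWeight K Q (fun w => y w x') i u|
      = ∑ u : Fin n,
          |Real.exp (attLogit K Q (fun w => y w x) i u) /
              (∑ s : Fin n, Real.exp (attLogit K Q (fun w => y w x) i s)) -
            Real.exp (attLogit K Q (fun w => y w x') i u) /
              (∑ s : Fin n, Real.exp (attLogit K Q (fun w => y w x') i s))| := by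
        simp only [attWeight]
    _ ≤ 2 * Real.exp (2 * C) / n * ∑ u : Fin n,
          |attLogit K Q (fun w => y w x) i u - attLogit K Q (fun w => y w x') i u| :=
        aux_softmax_tv hn _ _ C ha hb
    _ ≤ 2 * Real.exp (2 * C) / n * (sN * Real.sqrt d * ((n : ℝ) * Δi + SΔ)) :=
        mul_le_mul_of_nonneg_left hsum
          (by positivity)
    _ = 2 * Real.exp (2 * C) * (sN * Real.sqrt d) * (Δi + (1 / n) * SΔ) := by
        field_simp
    _ ≤ 2 * Real.exp (2 * C) * Real.exp (2 * C) * (Δi + (1 / n) * SΔ) := by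
        have hnonneg : 0 ≤ Δi + (1 / (n:ℝ)) * SΔ :=
          add_nonneg hΔinn (mul_nonneg (by positivity) hSΔnn)
        have h5 : 2 * Real.exp (2 * C) * (sN * Real.sqrt d) ≤
            2 * Real.exp (2 * C) * Real.exp (2 * C) :=
          mul_le_mul_of_nonneg_left hkey (by positivity)
        exact mul_le_mul_of_nonneg_right h5 hnonneg
    _ = 2 * Real.exp (4 * C) * (Δi + (1 / n) * SΔ) := by
        rw [show Real.exp (4 * C) = Real.exp (2 * C) * Real.exp (2 * C) by
          rw [← Real.exp_add]; ring_nf]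
        ring
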